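/- Let G be a finite simple graph, uv an edge with u ≠ v, and k ≥ 1. Let h_k(G) be the number of spanning subgraphs of G with exactly k connected components in which every vertex has degree 2 (2-factors with k components). Then h_k(G) = h_k(G − uv) + h_k(G / uv) − h_k(G − u) − h_k(G − v). -/

import Mathlib

/-- A finite multigraph with loops: vertices and edges are labeled by
naturals, and `φ` assigns to each edge label its unordered pair of
endpoints. -/
structure MG where
  V : Finset ℕ
  E : Finset ℕ
  φ : ℕ → Sym2 ℕ

namespace MG

noncomputable section
open scoped Classical
open Finset

/-- Well-formed: endpoints of edges lie in the vertex set. -/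
def WF (G : MG) : Prop := ∀ e ∈ G.E, ∀ x ∈ G.φ e, x ∈ G.V

/-- Simple: no loops and no parallel edges, and well-formed. -/
def Simple (G : MG) : Prop :=
  G.WF ∧ (∀ e ∈ G.E, ¬ (G.φ e).IsDiag) ∧
    ∀ e ∈ G.E, ∀ e' ∈ G.E, G.φ e = G.φ e' → e = e'

/-- Degree of a vertex (loops count twice). -/
def deg (G : MG) (v : ℕ) : ℕ :=
  ∑ e ∈ G.E, ((if v ∈ G.φ e then 1 else 0) + (if G.φ e = Sym2.diag v then 1 else 0))

/-- Adjacency by some edge. -/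
def Adj (G : MG) (x y : ℕ) : Prop := ∃ e ∈ G.E, G.φ e = s(x, y)

/-- Reachability. -/
def Reach (G : MG) : ℕ → ℕ → Prop := Relation.ReflTransGen G.Adj

/-- The connected component of `v` (as a set of vertices). -/
def comp (G : MG) (v : ℕ) : Finset ℕ := G.V.filter (fun w => G.Reach v w)

/-- Number of connected components. -/
def k (G : MG) : ℕ := (G.V.image G.comp).card

/-- The subgraph determined by a pair (vertex set, edge set). -/
def sub (G : MG) (p : Finset ℕ × Finset ℕ) : MG := ⟨p.1, p.2, G.φ⟩

/-- All subgraphs of `G`, encoded as (vertex set, edge set) pairs. -/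
def subPairs (G : MG) : Finset (Finset ℕ × Finset ℕ) :=
  (G.V.powerset ×ˢ G.E.powerset).filter (fun p => ∀ e ∈ p.2, ∀ x ∈ G.φ e, x ∈ p.1)

/-- Edge deletion. -/
def delE (G : MG) (e : ℕ) : MG := ⟨G.V, G.E.erase e, G.φ⟩

/-- Vertex deletion (with all incident edges). -/
def delV (G : MG) (u : ℕ) : MG :=
  ⟨G.V.erase u, G.E.filter (fun e => u ∉ G.φ e), G.φ⟩

/-- Contraction of the edge `e` with endpoints `u`, `v`: delete `e`,
merge `u` into `v`. -/
def contract (G : MG) (e u v : ℕ) : MG :=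
  ⟨G.V.erase u, G.E.erase e,
    fun e' => Sym2.map (fun x => if x = u then v else x) (G.φ e')⟩

/-- Disjoint union (sensible when the vertex and edge label sets are disjoint). -/
def disjUnion (G H : MG) : MG :=
  ⟨G.V ∪ H.V, G.E ∪ H.E, fun e => if e ∈ G.E then G.φ e else H.φ e⟩

/-- One vertex with `n` loops. -/
def K1 (n : ℕ) : MG := ⟨{0}, Finset.range n, fun _ => Sym2.diag 0⟩

/-- The empty graph. -/
def emp : MG := ⟨∅, ∅, fun _ => Sym2.diag 0⟩

/-- Number of Hamiltonian cycles: connected spanning subgraphs with all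
degrees 2. -/
def h (G : MG) : ℕ :=
  ((G.subPairs).filter (fun p =>
    p.1 = G.V ∧ (G.sub p).k = 1 ∧ ∀ v ∈ p.1, (G.sub p).deg v = 2)).card

/-- Number of 2-factors with exactly `k₀` components. -/
def hk (G : MG) (k₀ : ℕ) : ℕ :=
  ((G.subPairs).filter (fun p =>
    p.1 = G.V ∧ (G.sub p).k = k₀ ∧ ∀ v ∈ p.1, (G.sub p).deg v = 2)).card

/-- Number of subgraphs with `k₀` components and `l` edges in which every
vertex has degree 2. -/
def ckl (G : MG) (k₀ l : ℕ) : ℕ :=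
  ((G.subPairs).filter (fun p =>
    (G.sub p).k = k₀ ∧ p.2.card = l ∧ ∀ v ∈ p.1, (G.sub p).deg v = 2)).card

/-- Number of `j`-matchings: subgraphs with `2j` vertices, all of degree 1. -/
def m (G : MG) (j : ℕ) : ℕ :=
  ((G.subPairs).filter (fun p =>
    p.1.card = 2 * j ∧ ∀ v ∈ p.1, (G.sub p).deg v = 1)).card

/-- Isomorphism of multigraphs. -/
def Iso (G H : MG) : Prop :=
  ∃ f g : ℕ → ℕ, Set.BijOn f ↑G.V ↑H.V ∧ Set.BijOn g ↑G.E ↑H.E ∧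
    ∀ e ∈ G.E, H.φ (g e) = Sym2.map f (G.φ e)

end
end MG



section Aux
namespace MG
noncomputable section
open scoped Classical
open Finset

lemma aux_exists_pair (z : Sym2 ℕ) : ∃ a b, z = s(a,b) := by
  induction z using Sym2.ind with | _ a b => exact ⟨a,b,rfl⟩

lemma aux_adj_symm {H : MG} {x y : ℕ} (h : H.Adj x y) : H.Adj y x := by
  obtain ⟨e, he, hφ⟩ := h
  exact ⟨e, he, hφ.trans (Sym2.eq_swap)⟩

lemma aux_reach_symm {H : MG} {x y : ℕ} (h : H.Reach x y) : H.Reach y x := by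
  induction h with
  | refl => exact .refl
  | tail _ h2 ih => exact .trans (.single (aux_adj_symm h2)) ih

lemma aux_reach_trans {H : MG} {x y z : ℕ} (h : H.Reach x y) (h2 : H.Reach y z) :
    H.Reach x z := Relation.ReflTransGen.trans h h2

lemma aux_comp_eq_of_reach {H : MG} {a b : ℕ} (h : H.Reach a b) : H.comp a = H.comp b := by
  unfold comp
  apply Finset.filter_congr
  intro w _
  exact ⟨fun hw => aux_reach_trans (aux_reach_symm h) hw, fun hw => aux_reach_trans h hw⟩

lemma aux_k_congr {H H' : MG} (hV : H.V = H'.V) (hA : ∀ x y, H.Adj x y ↔ H'.Adj x y) :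
    H.k = H'.k := by
  have hR : ∀ x y, H.Reach x y ↔ H'.Reach x y := by
    intro x y
    constructor <;> intro h <;> [skip; skip] <;>
    · induction h with
      | refl => exact .refl
      | tail _ h2 ih => exact .tail ih (by first | exact (hA _ _).1 h2 | exact (hA _ _).2 h2)
  have hc : H.comp = H'.comp := by
    funext a
    unfold comp
    rw [hV]
    apply Finset.filter_congr
    intro w _
    simp [hR]
  unfold k
  rw [hV, hc]

lemma aux_deg_congr {H H' : MG} (hE : H.E = H'.E) (hφ : ∀ e ∈ H.E, H.φ e = H'.φ e) (x : ℕ) :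
    H.deg x = H'.deg x := by
  unfold deg
  rw [← hE]
  apply Finset.sum_congr rfl
  intro e he
  rw [hφ e he]

lemma aux_deg_eq_card {H : MG} (hnl : ∀ e ∈ H.E, ¬ (H.φ e).IsDiag) (x : ℕ) :
    H.deg x = (H.E.filter (fun e => x ∈ H.φ e)).card := by
  unfold deg
  rw [Finset.card_filter]
  apply Finset.sum_congr rfl
  intro e he
  have : ¬ (H.φ e = Sym2.diag x) := by
    intro h
    exact hnl e he (h ▸ Sym2.diag_isDiag x)
  simp [this]


lemma aux_adj_mk {V E : Finset ℕ} {φ : ℕ → Sym2 ℕ} {x y : ℕ} :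
    (MG.mk V E φ).Adj x y ↔ ∃ e ∈ E, φ e = s(x,y) := Iff.rfl

lemma aux_k_relabel (H H' : MG) (f : ℕ → ℕ)
    (hV : H'.V = H.V.image f)
    (hA : ∀ x y, H'.Adj x y ↔ ∃ a b, H.Adj a b ∧ f a = x ∧ f b = y)
    (hWF : ∀ a b, H.Adj a b → a ∈ H.V ∧ b ∈ H.V)
    (hinj : Set.InjOn f ↑H.V) : H'.k = H.k := by
  have push : ∀ a b, H.Reach a b → H'.Reach (f a) (f b) := by
    intro a b h
    induction h with
    | refl => exact .refl
    | tail _ h2 ih => exact .tail ih ((hA _ _).2 ⟨_, _, h2, rfl, rfl⟩)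
  have pull : ∀ x w, H'.Reach x w → ∀ a ∈ H.V, f a = x → ∃ b ∈ H.V, f b = w ∧ H.Reach a b := by
    intro x w h
    induction h with
    | refl => exact fun a ha hfa => ⟨a, ha, hfa, .refl⟩
    | tail _ h2 ih =>
        intro a ha hfa
        obtain ⟨b, hb, hfb, hr⟩ := ih a ha hfa
        obtain ⟨a', b', hadj, hfa', hfb'⟩ := (hA _ _).1 h2
        obtain ⟨ha', hb'⟩ := hWF _ _ hadj
        have : b = a' := hinj hb ha' (hfb.trans hfa'.symm)
        exact ⟨b', hb', hfb', .tail (this ▸ hr) hadj⟩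
  have hcomp : ∀ a ∈ H.V, H'.comp (f a) = (H.comp a).image f := by
    intro a ha
    ext w
    simp only [comp, Finset.mem_image, Finset.mem_filter, hV]
    constructor
    · rintro ⟨hw, hr⟩
      obtain ⟨b, hb, hfb, hrb⟩ := pull _ _ hr a ha rfl
      exact ⟨b, ⟨hb, hrb⟩, hfb⟩
    · rintro ⟨b, ⟨hb, hrb⟩, hfb⟩
      exact ⟨⟨b, hb, hfb⟩, hfb ▸ push _ _ hrb⟩
  have himg : H'.V.image H'.comp = (H.V.image H.comp).image (fun C => C.image f) := by
    rw [hV, Finset.image_image, Finset.image_image]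
    apply Finset.image_congr
    intro a ha
    exact hcomp a ha
  unfold k
  rw [himg, Finset.card_image_of_injOn]
  intro C hC D hD hCD
  simp only [Finset.coe_image, Finset.mem_image] at hC hD
  obtain ⟨a, _, rfl⟩ := hC
  obtain ⟨b, _, rfl⟩ := hD
  have hsub : ∀ x : ℕ, H.comp x ⊆ H.V := fun x => Finset.filter_subset _ _
  have hCD' : (H.comp a).image f = (H.comp b).image f := hCD
  apply Finset.Subset.antisymm <;> intro x hx
  · have : f x ∈ (H.comp b).image f := hCD' ▸ Finset.mem_image_of_mem f hx
    obtain ⟨y, hy, hfy⟩ := Finset.mem_image.1 this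
    rwa [hinj (hsub b hy) (hsub a hx) hfy] at hy
  · have : f x ∈ (H.comp a).image f := hCD' ▸ Finset.mem_image_of_mem f hx
    obtain ⟨y, hy, hfy⟩ := Finset.mem_image.1 this
    rwa [hinj (hsub a hy) (hsub b hx) hfy] at hy


lemma aux_fiber {u v a b : ℕ} (h : (if a = u then v else a) = (if b = u then v else b)) :
    a = b ∨ (a = u ∧ b = v) ∨ (a = v ∧ b = u) := by
  by_cases ha : a = u <;> by_cases hb : b = u <;> simp_all

lemma aux_k_contract (H : MG) (u v e₀ : ℕ) (hu : u ∈ H.V) (hv : v ∈ H.V) (huv : u ≠ v)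
    (he : e₀ ∈ H.E) (hφ : H.φ e₀ = s(u,v))
    (hWF : ∀ a b, H.Adj a b → a ∈ H.V ∧ b ∈ H.V) :
    (MG.mk (H.V.erase u) (H.E.erase e₀)
      (fun e' => Sym2.map (fun x => if x = u then v else x) (H.φ e'))).k = H.k := by
  set f : ℕ → ℕ := fun x => if x = u then v else x with hf
  set H' : MG := MG.mk (H.V.erase u) (H.E.erase e₀)
      (fun e' => Sym2.map f (H.φ e')) with hH'
  have hfu : f u = v := by simp [hf]
  have hfne : ∀ x, f x ≠ u := by
    intro x
    simp only [hf]
    split_ifs with h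
    · exact huv.symm
    · exact h
  have hfV : ∀ x ∈ H.V, f x ∈ H.V := by
    intro x hx
    by_cases h : x = u <;> simp [hf, h, hx, hv]
  have huvR : H.Reach u v := Relation.ReflTransGen.single ⟨e₀, he, hφ⟩
  have hfid : ∀ x, x ≠ u → f x = x := fun x hx => by simp [hf, hx]
  have hfiberR : ∀ a b, f a = f b → H.Reach a b := by
    intro a b h
    rcases aux_fiber h with h | ⟨h1, h2⟩ | ⟨h1, h2⟩
    · exact h ▸ .refl
    · exact h1 ▸ h2 ▸ huvR
    · exact h1 ▸ h2 ▸ aux_reach_symm huvR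
  have hAdj' : ∀ x y, H'.Adj x y ↔ ∃ e' ∈ H.E.erase e₀, Sym2.map f (H.φ e') = s(x,y) := by
    intro x y; exact Iff.rfl
  have push : ∀ a b, H.Reach a b → H'.Reach (f a) (f b) := by
    intro a b h
    induction h with
    | refl => exact .refl
    | @tail x y _ h2 ih =>
        obtain ⟨e', he', hφ'⟩ := h2
        by_cases hee : e' = e₀
        · subst hee
          rw [hφ] at hφ'
          have heq : f x = f y := by
            rcases Sym2.eq_iff.1 hφ' with ⟨h1, h2⟩ | ⟨h1, h2⟩ <;> subst h1 <;> subst h2 <;>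
              simp [hfu, hfid v huv.symm]
          exact heq ▸ ih
        · refine .tail ih ⟨e', Finset.mem_erase.2 ⟨hee, he'⟩, ?_⟩
          show Sym2.map f (H.φ e') = _
          rw [hφ', Sym2.map_pair_eq]
  have pull : ∀ x w, H'.Reach x w → ∀ a, f a = x → ∃ b, f b = w ∧ H.Reach a b := by
    intro x w h
    induction h with
    | refl => exact fun a hfa => ⟨a, hfa, .refl⟩
    | tail _ h2 ih =>
        intro a hfa
        obtain ⟨b, hfb, hr⟩ := ih a hfa
        obtain ⟨e', he', hφ0⟩ := h2
        obtain ⟨a', b', hab⟩ := aux_exists_pair (H.φ e')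
        have hφ' : Sym2.map f (H.φ e') = _ := hφ0
        rw [hab, Sym2.map_pair_eq] at hφ'
        have hadj : H.Adj a' b' := ⟨e', (Finset.mem_erase.1 he').2, hab⟩
        rcases Sym2.eq_iff.1 hφ' with ⟨h1, h2⟩ | ⟨h1, h2⟩
        · exact ⟨b', h2, .tail (aux_reach_trans hr (hfiberR b a' (hfb.trans h1.symm))) hadj⟩
        · exact ⟨a', h1, .tail (aux_reach_trans hr (hfiberR b b' (hfb.trans h2.symm)))
            (aux_adj_symm hadj)⟩
  have hreachV : ∀ a b, a ∈ H.V → H.Reach a b → b ∈ H.V := by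
    intro a b ha h
    induction h with
    | refl => exact ha
    | tail _ h2 _ => exact (hWF _ _ h2).2
  have hcomp : ∀ a ∈ H.V, H'.comp (f a) = (H.comp a).image f := by
    intro a ha
    ext w
    simp only [comp, Finset.mem_image, Finset.mem_filter]
    constructor
    · rintro ⟨hw, hr⟩
      obtain ⟨b, hfb, hrb⟩ := pull _ _ hr a rfl
      exact ⟨b, ⟨hreachV a b ha hrb, hrb⟩, hfb⟩
    · rintro ⟨b, ⟨hb, hrb⟩, hfb⟩
      have : w ∈ H'.V := by
        show w ∈ H.V.erase u
        exact Finset.mem_erase.2 ⟨hfb ▸ hfne b, hfb ▸ hfV b hb⟩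
      exact ⟨this, hfb ▸ push _ _ hrb⟩
  have himg : H'.V.image H'.comp = (H.V.image H.comp).image (fun C => C.image f) := by
    apply Finset.Subset.antisymm
    · intro C hC
      obtain ⟨w, hw, rfl⟩ := Finset.mem_image.1 hC
      have hw' : w ∈ H.V.erase u := hw
      obtain ⟨hwne, hwV⟩ := Finset.mem_erase.1 hw'
      rw [show w = f w from (hfid w hwne).symm, hcomp w hwV]
      exact Finset.mem_image_of_mem _ (Finset.mem_image_of_mem _ hwV)
    · intro C hC
      obtain ⟨D, hD, rfl⟩ := Finset.mem_image.1 hC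
      obtain ⟨a, ha, rfl⟩ := Finset.mem_image.1 hD
      refine Finset.mem_image.2 ⟨f a, ?_, hcomp a ha⟩
      show f a ∈ H.V.erase u
      exact Finset.mem_erase.2 ⟨hfne a, hfV a ha⟩
  have hcompuv : ∀ a, u ∈ H.comp a ↔ v ∈ H.comp a := by
    intro a
    simp only [comp, Finset.mem_filter, hu, hv, true_and]
    exact ⟨fun h => aux_reach_trans h huvR, fun h => aux_reach_trans h (aux_reach_symm huvR)⟩
  unfold k
  rw [show H'.V.image H'.comp = ((MG.mk (H.V.erase u) (H.E.erase e₀)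
      (fun e' => Sym2.map f (H.φ e')) : MG).V.image
      (MG.mk (H.V.erase u) (H.E.erase e₀) (fun e' => Sym2.map f (H.φ e')) : MG).comp) from rfl,
    himg, Finset.card_image_of_injOn]
  intro C hC D hD hCD
  simp only [Finset.coe_image, Set.mem_image, Finset.mem_coe, Finset.mem_image] at hC hD
  obtain ⟨a, _, rfl⟩ := hC
  obtain ⟨b, _, rfl⟩ := hD
  have hCD' : (H.comp a).image f = (H.comp b).image f := hCD
  have key : ∀ c d : ℕ, (H.comp c).image f ⊆ (H.comp d).image f → H.comp c ⊆ H.comp d := by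
    intro c d hsub x hx
    have : f x ∈ (H.comp d).image f := hsub (Finset.mem_image_of_mem f hx)
    obtain ⟨y, hy, hfy⟩ := Finset.mem_image.1 this
    rcases aux_fiber hfy with h | ⟨h1, h2⟩ | ⟨h1, h2⟩
    · exact h ▸ hy
    · rw [h2]; rw [h1] at hy
      exact (hcompuv d).1 hy
    · rw [h2]; rw [h1] at hy
      exact (hcompuv d).2 hy
  exact Finset.Subset.antisymm (key a b hCD'.le) (key b a hCD'.ge)


/-- The set of 2-factor pairs with `k₀` components. -/
def auxP (H : MG) (k₀ : ℕ) : Finset (Finset ℕ × Finset ℕ) :=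
  H.subPairs.filter (fun p =>
    p.1 = H.V ∧ (H.sub p).k = k₀ ∧ ∀ v ∈ p.1, (H.sub p).deg v = 2)

lemma aux_hk (H : MG) (k₀ : ℕ) : H.hk k₀ = (auxP H k₀).card := rfl

lemma aux_mem_auxP {H : MG} {k₀ : ℕ} {p : Finset ℕ × Finset ℕ} :
    p ∈ auxP H k₀ ↔
    p.2 ⊆ H.E ∧ (∀ e' ∈ p.2, ∀ x ∈ H.φ e', x ∈ p.1) ∧ p.1 = H.V ∧ (H.sub p).k = k₀ ∧
      ∀ w ∈ p.1, (H.sub p).deg w = 2 := by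
  simp only [auxP, subPairs, Finset.mem_filter, Finset.mem_product, Finset.mem_powerset]
  constructor
  · rintro ⟨⟨⟨h1, h2⟩, h3⟩, h4, h5, h6⟩
    exact ⟨h2, h3, h4, h5, h6⟩
  · rintro ⟨h2, h3, h4, h5, h6⟩
    exact ⟨⟨⟨h4 ▸ Finset.Subset.refl _, h2⟩, h3⟩, h4, h5, h6⟩

lemma aux_stepA (G : MG) (e : ℕ) (he : e ∈ G.E) (k₀ : ℕ) :
    (auxP G k₀).card = (auxP (G.delE e) k₀).card
      + ((auxP G k₀).filter (fun p => e ∈ p.2)).card := by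
  have hsplit := Finset.card_filter_add_card_filter_not
    (s := auxP G k₀) (p := fun p => e ∈ p.2)
  have heq : auxP (G.delE e) k₀ = (auxP G k₀).filter (fun p => ¬ e ∈ p.2) := by
    ext p
    rw [Finset.mem_filter, aux_mem_auxP, aux_mem_auxP]
    have hsub : (G.delE e).sub p = G.sub p := rfl
    have hV : (G.delE e).V = G.V := rfl
    have hE : (G.delE e).E = G.E.erase e := rfl
    rw [hsub, hV, hE]
    constructor
    · rintro ⟨h1, h2, h3, h4, h5⟩
      have := Finset.subset_erase.1 h1
      exact ⟨⟨this.1, h2, h3, h4, h5⟩, this.2⟩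
    · rintro ⟨⟨h1, h2, h3, h4, h5⟩, h6⟩
      exact ⟨Finset.subset_erase.2 ⟨h1, h6⟩, h2, h3, h4, h5⟩
  rw [heq]
  omega


lemma aux_map_id {u v : ℕ} (z : Sym2 ℕ) (hz : u ∉ z) :
    Sym2.map (fun x => if x = u then v else x) z = z := by
  obtain ⟨a, b, rfl⟩ := aux_exists_pair z
  rw [Sym2.mem_iff] at hz
  push_neg at hz
  rw [Sym2.map_pair_eq, if_neg (fun h => hz.1 h.symm), if_neg (fun h => hz.2 h.symm)]

lemma aux_mem_map_v {u v : ℕ} (huv : u ≠ v) (z : Sym2 ℕ) :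
    v ∈ Sym2.map (fun x => if x = u then v else x) z ↔ (u ∈ z ∨ v ∈ z) := by
  obtain ⟨a, b, rfl⟩ := aux_exists_pair z
  rw [Sym2.map_pair_eq, Sym2.mem_iff, Sym2.mem_iff, Sym2.mem_iff]
  by_cases ha : a = u <;> by_cases hb : b = u <;> simp [ha, hb] <;> tauto

lemma aux_mem_map_w {u v w : ℕ} (hwu : w ≠ u) (hwv : w ≠ v) (z : Sym2 ℕ) :
    w ∈ Sym2.map (fun x => if x = u then v else x) z ↔ w ∈ z := by
  obtain ⟨a, b, rfl⟩ := aux_exists_pair z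
  rw [Sym2.map_pair_eq, Sym2.mem_iff, Sym2.mem_iff]
  by_cases ha : a = u <;> by_cases hb : b = u <;> simp [ha, hb] <;> tauto

lemma aux_eq_of_mem_mem {u v : ℕ} (z : Sym2 ℕ) (hu : u ∈ z) (hv : v ∈ z) (huv : u ≠ v) :
    z = s(u, v) := by
  obtain ⟨a, b, rfl⟩ := aux_exists_pair z
  rw [Sym2.mem_iff] at hu hv
  rw [Sym2.eq_iff]
  rcases hu with rfl | rfl <;> rcases hv with rfl | rfl <;> tauto


lemma aux_stepB (G : MG) (hG : G.Simple) (e u v : ℕ) (he : e ∈ G.E) (hφ : G.φ e = s(u, v))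
    (huv : u ≠ v) (k₀ : ℕ) :
    (auxP (G.contract e u v) k₀).card =
      (auxP (G.delV u) k₀).card + (auxP (G.delV v) k₀).card
      + ((auxP G k₀).filter (fun p => e ∈ p.2)).card := by
  obtain ⟨hWFG, hnl, hsimp⟩ := hG
  set f : ℕ → ℕ := fun x => if x = u then v else x with hf
  set C : MG := G.contract e u v with hC
  have huV : u ∈ G.V := hWFG e he u (by rw [hφ]; exact Sym2.mem_mk_left u v)
  have hvV : v ∈ G.V := hWFG e he v (by rw [hφ]; exact Sym2.mem_mk_right u v)
  have hfu : f u = v := by simp [hf]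
  have hfne : ∀ x, f x ≠ u := by
    intro x
    simp only [hf]
    split_ifs with h
    · exact huv.symm
    · exact h
  have hfid : ∀ x, x ≠ u → f x = x := fun x hx => by simp [hf, hx]
  have hvinV' : v ∈ G.V.erase u := Finset.mem_erase.2 ⟨huv.symm, hvV⟩
  have huinV' : u ∈ G.V.erase v := Finset.mem_erase.2 ⟨huv, huV⟩
  have hfVe : ∀ x ∈ G.V, f x ∈ G.V.erase u := by
    intro x hx
    refine Finset.mem_erase.2 ⟨hfne x, ?_⟩
    by_cases h : x = u
    · rw [h, hfu]; exact hvV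
    · rw [hfid x h]; exact hx
  have hnlC : ∀ e' ∈ G.E.erase e, ¬ (Sym2.map f (G.φ e')).IsDiag := by
    intro e' he'
    obtain ⟨hne, heE⟩ := Finset.mem_erase.1 he'
    obtain ⟨a, b, hab⟩ := aux_exists_pair (G.φ e')
    rw [hab, Sym2.map_pair_eq, Sym2.mk_isDiag_iff]
    intro hfab
    rcases aux_fiber hfab with h | ⟨h1, h2⟩ | ⟨h1, h2⟩
    · exact hnl e' heE (by rw [hab]; exact Sym2.mk_isDiag_iff.2 h)
    · exact hne (hsimp e' heE e he (by rw [hab, h1, h2, hφ]))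
    · exact hne (hsimp e' heE e he (by rw [hab, h1, h2, hφ]; exact Sym2.eq_swap))
  have hdegG' : ∀ (X1 S : Finset ℕ), S ⊆ G.E → ∀ w,
      (G.sub (X1, S)).deg w = (S.filter (fun e' => w ∈ G.φ e')).card :=
    fun X1 S hS w => aux_deg_eq_card (H := G.sub (X1, S)) (fun e' he' => hnl e' (hS he')) w
  have hdegC' : ∀ (X1 S : Finset ℕ), S ⊆ G.E.erase e → ∀ w,
      (C.sub (X1, S)).deg w = (S.filter (fun e' => w ∈ Sym2.map f (G.φ e'))).card :=
    fun X1 S hS w => aux_deg_eq_card (H := C.sub (X1, S)) (fun e' he' => hnlC e' (hS he')) w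
  have hfiltv : ∀ S : Finset ℕ, (∀ e' ∈ S, v ∉ G.φ e') →
      S.filter (fun e' => v ∈ Sym2.map f (G.φ e')) = S.filter (fun e' => u ∈ G.φ e') := by
    intro S hS
    apply Finset.filter_congr
    intro e' he'
    rw [aux_mem_map_v huv]
    exact ⟨fun h => h.resolve_right (hS e' he'), Or.inl⟩
  have hfiltw : ∀ (S : Finset ℕ) w, w ≠ u → w ≠ v →
      S.filter (fun e' => w ∈ Sym2.map f (G.φ e')) = S.filter (fun e' => w ∈ G.φ e') := by
    intro S w hwu hwv
    apply Finset.filter_congr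
    intro e' _
    exact aux_mem_map_w hwu hwv _
  have hfiltuv : ∀ S : Finset ℕ, S ⊆ G.E.erase e →
      (S.filter (fun e' => v ∈ Sym2.map f (G.φ e'))).card
        = (S.filter (fun e' => u ∈ G.φ e')).card + (S.filter (fun e' => v ∈ G.φ e')).card := by
    intro S hS
    have h1 : S.filter (fun e' => v ∈ Sym2.map f (G.φ e'))
        = S.filter (fun e' => u ∈ G.φ e' ∨ v ∈ G.φ e') := by
      apply Finset.filter_congr
      intro e' _
      exact aux_mem_map_v huv _
    have h2 : S.filter (fun e' => u ∈ G.φ e' ∨ v ∈ G.φ e')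
        = S.filter (fun e' => u ∈ G.φ e') ∪ S.filter (fun e' => v ∈ G.φ e') :=
      Finset.filter_or _ _ _
    have h3 : Disjoint (S.filter (fun e' => u ∈ G.φ e')) (S.filter (fun e' => v ∈ G.φ e')) := by
      rw [Finset.disjoint_left]
      intro a ha hb
      obtain ⟨haS, hau⟩ := Finset.mem_filter.1 ha
      obtain ⟨-, hav⟩ := Finset.mem_filter.1 hb
      obtain ⟨hane, haE⟩ := Finset.mem_erase.1 (hS haS)
      exact hane (hsimp a haE e he ((aux_eq_of_mem_mem _ hau hav huv).trans hφ.symm))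
    rw [h1, h2, Finset.card_union_of_disjoint h3]
  -- reusable k-equality for the G - v ↔ contraction correspondence
  have hkrelV : ∀ S : Finset ℕ, S ⊆ G.E → (∀ e' ∈ S, v ∉ G.φ e') →
      (C.sub (G.V.erase u, S)).k = ((G.delV v).sub (G.V.erase v, S)).k := by
    intro S hS hSv
    have himgV : (G.V.erase v).image f = G.V.erase u := by
      ext x
      simp only [Finset.mem_image, Finset.mem_erase]
      constructor
      · rintro ⟨a, ⟨hav, haV⟩, rfl⟩
        exact Finset.mem_erase.1 (hfVe a haV)
      · rintro ⟨hxu, hxV⟩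
        by_cases hx : x = v
        · exact ⟨u, ⟨huv, huV⟩, by rw [hfu, hx]⟩
        · exact ⟨x, ⟨hx, hxV⟩, hfid x hxu⟩
    apply aux_k_relabel _ _ f
    · exact himgV.symm
    · intro x y
      constructor
      · rintro ⟨e', he', hq⟩
        obtain ⟨a, b, hab⟩ := aux_exists_pair (G.φ e')
        have hq' : Sym2.map f (G.φ e') = s(x, y) := hq
        rw [hab, Sym2.map_pair_eq, Sym2.eq_iff] at hq'
        rcases hq' with ⟨h1, h2⟩ | ⟨h1, h2⟩
        · exact ⟨a, b, ⟨e', he', hab⟩, h1, h2⟩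
        · exact ⟨b, a, ⟨e', he', hab.trans Sym2.eq_swap⟩, h2, h1⟩
      · rintro ⟨a, b, ⟨e', he', hab⟩, rfl, rfl⟩
        have hab' : G.φ e' = s(a, b) := hab
        exact ⟨e', he', by show Sym2.map f (G.φ e') = _; rw [hab', Sym2.map_pair_eq]⟩
    · rintro a b ⟨e', he', hab⟩
      have hab' : G.φ e' = s(a, b) := hab
      have haz : a ∈ G.φ e' := by rw [hab']; exact Sym2.mem_mk_left a b
      have hbz : b ∈ G.φ e' := by rw [hab']; exact Sym2.mem_mk_right a b
      constructor
      · exact Finset.mem_erase.2 ⟨fun h => hSv e' he' (h ▸ haz), hWFG e' (hS he') a haz⟩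
      · exact Finset.mem_erase.2 ⟨fun h => hSv e' he' (h ▸ hbz), hWFG e' (hS he') b hbz⟩
    · intro a ha b hb hab
      have ha' : a ∈ G.V.erase v := ha
      have hb' : b ∈ G.V.erase v := hb
      rcases aux_fiber hab with h | ⟨h1, h2⟩ | ⟨h1, h2⟩
      · exact h
      · exact absurd h2 (Finset.mem_erase.1 hb').1
      · exact absurd h1 (Finset.mem_erase.1 ha').1
  -- endpoints of contracted edges lie in the contracted vertex set
  have hCend : ∀ e' ∈ G.E, ∀ x ∈ Sym2.map f (G.φ e'), x ∈ G.V.erase u := by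
    intro e' he' x hx
    obtain ⟨a, b, hab⟩ := aux_exists_pair (G.φ e')
    rw [hab, Sym2.map_pair_eq, Sym2.mem_iff] at hx
    have haz : a ∈ G.φ e' := by rw [hab]; exact Sym2.mem_mk_left a b
    have hbz : b ∈ G.φ e' := by rw [hab]; exact Sym2.mem_mk_right a b
    rcases hx with rfl | rfl
    · exact hfVe a (hWFG e' he' a haz)
    · exact hfVe b (hWFG e' he' b hbz)
  -- Class 1 : contracted 2-factors avoiding u come from G - u
  have hB1 : (auxP C k₀).filter (fun q => ∀ e' ∈ q.2, u ∉ G.φ e') = auxP (G.delV u) k₀ := by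
    ext q
    rw [Finset.mem_filter, aux_mem_auxP, aux_mem_auxP]
    constructor
    · rintro ⟨⟨h1, h2, h3, h4, h5⟩, h6⟩
      have hid : ∀ e' ∈ q.2, C.φ e' = G.φ e' := fun e' he' => aux_map_id _ (h6 e' he')
      have hkk : (C.sub q).k = ((G.delV u).sub q).k := by
        refine aux_k_congr (H := C.sub q) (H' := (G.delV u).sub q) rfl ?_
        intro x y
        constructor
        · rintro ⟨e', he', hq⟩; exact ⟨e', he', (hid e' he').symm.trans hq⟩
        · rintro ⟨e', he', hq⟩; exact ⟨e', he', (hid e' he').trans hq⟩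
      have hdd : ∀ w, (C.sub q).deg w = ((G.delV u).sub q).deg w :=
        aux_deg_congr (H := C.sub q) (H' := (G.delV u).sub q) rfl (fun e' he' => hid e' he')
      refine ⟨?_, ?_, h3, hkk.symm.trans h4, fun w hw => (hdd w).symm.trans (h5 w hw)⟩
      · intro e' he'
        exact Finset.mem_filter.2 ⟨(Finset.mem_erase.1 (h1 he')).2, h6 e' he'⟩
      · intro e' he' x hx
        exact h2 e' he' x (by rw [hid e' he']; exact hx)
    · rintro ⟨h1, h2, h3, h4, h5⟩
      have h6 : ∀ e' ∈ q.2, u ∉ G.φ e' := fun e' he' => (Finset.mem_filter.1 (h1 he')).2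
      have hid : ∀ e' ∈ q.2, C.φ e' = G.φ e' := fun e' he' => aux_map_id _ (h6 e' he')
      have hkk : (C.sub q).k = ((G.delV u).sub q).k := by
        refine aux_k_congr (H := C.sub q) (H' := (G.delV u).sub q) rfl ?_
        intro x y
        constructor
        · rintro ⟨e', he', hq⟩; exact ⟨e', he', (hid e' he').symm.trans hq⟩
        · rintro ⟨e', he', hq⟩; exact ⟨e', he', (hid e' he').trans hq⟩
      have hdd : ∀ w, (C.sub q).deg w = ((G.delV u).sub q).deg w :=
        aux_deg_congr (H := C.sub q) (H' := (G.delV u).sub q) rfl (fun e' he' => hid e' he')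
      refine ⟨⟨?_, ?_, h3, hkk.trans h4, fun w hw => (hdd w).trans (h5 w hw)⟩, h6⟩
      · intro e' he'
        refine Finset.mem_erase.2 ⟨?_, (Finset.mem_filter.1 (h1 he')).1⟩
        intro hee
        exact h6 e' he' (by rw [hee, hφ]; exact Sym2.mem_mk_left u v)
      · intro e' he' x hx
        exact h2 e' he' x (by rw [hid e' he'] at hx; exact hx)
  -- Class 2 : contracted 2-factors through u only, come from G - v
  have hB2 : ((auxP C k₀).filter
      (fun q => (¬ ∀ e' ∈ q.2, u ∉ G.φ e') ∧ ∀ e' ∈ q.2, v ∉ G.φ e')).card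
      = (auxP (G.delV v) k₀).card := by
    apply Finset.card_nbij' (i := fun q => (G.V.erase v, q.2)) (j := fun p => (G.V.erase u, p.2))
    · rintro ⟨q1, q2⟩ hq
      simp only [Finset.mem_coe, Finset.mem_filter, aux_mem_auxP] at hq
      obtain ⟨⟨h1, h2, h3, h4, h5⟩, hne0, hv0⟩ := hq
      have h3' : q1 = G.V.erase u := h3
      subst h3'
      rw [Finset.mem_coe, aux_mem_auxP]
      have hsubE : q2 ⊆ G.E := fun e' he' => (Finset.mem_erase.1 (h1 he')).2
      refine ⟨?_, ?_, rfl, ?_, ?_⟩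
      · intro e' he'
        exact Finset.mem_filter.2 ⟨hsubE he', hv0 e' he'⟩
      · intro e' he' x hx
        exact Finset.mem_erase.2 ⟨fun hxv => hv0 e' he' (hxv ▸ hx), hWFG e' (hsubE he') x hx⟩
      · exact (hkrelV q2 hsubE hv0).symm.trans h4
      · intro w hw
        obtain ⟨hwv, hwV⟩ := Finset.mem_erase.1 hw
        show (G.sub (G.V.erase v, q2)).deg w = 2
        rw [hdegG' (G.V.erase v) q2 hsubE w]
        by_cases hwu : w = u
        · rw [hwu, ← hfiltv q2 hv0]
          have h5v : (C.sub (G.V.erase u, q2)).deg v = 2 := h5 v hvinV'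
          rw [hdegC' (G.V.erase u) q2 h1 v] at h5v
          exact h5v
        · have h5w : (C.sub (G.V.erase u, q2)).deg w = 2 :=
            h5 w (Finset.mem_erase.2 ⟨hwu, hwV⟩)
          rw [hdegC' (G.V.erase u) q2 h1 w, hfiltw q2 w hwu hwv] at h5w
          exact h5w
    · rintro ⟨p1, p2⟩ hp
      rw [Finset.mem_coe, aux_mem_auxP] at hp
      obtain ⟨h1, h2, h3, h4, h5⟩ := hp
      have h3' : p1 = G.V.erase v := h3
      subst h3'
      have hsubE : p2 ⊆ G.E := fun e' he' => (Finset.mem_filter.1 (h1 he')).1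
      have hv0 : ∀ e' ∈ p2, v ∉ G.φ e' := fun e' he' => (Finset.mem_filter.1 (h1 he')).2
      have hsubE' : p2 ⊆ G.E.erase e := by
        intro e' he'
        refine Finset.mem_erase.2 ⟨?_, hsubE he'⟩
        intro hee
        exact hv0 e' he' (by rw [hee, hφ]; exact Sym2.mem_mk_right u v)
      have hdegu : (p2.filter (fun e' => u ∈ G.φ e')).card = 2 := by
        have h5u : (G.sub (G.V.erase v, p2)).deg u = 2 := h5 u huinV'
        rw [hdegG' (G.V.erase v) p2 hsubE u] at h5u
        exact h5u
      rw [Finset.mem_coe, Finset.mem_filter, aux_mem_auxP]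
      refine ⟨⟨hsubE', ?_, rfl, ?_, ?_⟩, ?_, fun e' he' => hv0 e' he'⟩
      · intro e' he' x hx
        have hx' : x ∈ Sym2.map f (G.φ e') := hx
        show x ∈ G.V.erase u
        exact hCend e' (hsubE he') x hx'
      · exact (hkrelV p2 hsubE hv0).trans h4
      · intro w hw
        have hw' : w ∈ G.V.erase u := hw
        obtain ⟨hwu, hwV⟩ := Finset.mem_erase.1 hw'
        show (C.sub (G.V.erase u, p2)).deg w = 2
        rw [hdegC' (G.V.erase u) p2 hsubE' w]
        by_cases hwv : w = v
        · rw [hwv, hfiltv p2 hv0]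
          exact hdegu
        · rw [hfiltw p2 w hwu hwv]
          have h5w : (G.sub (G.V.erase v, p2)).deg w = 2 :=
            h5 w (Finset.mem_erase.2 ⟨hwv, hwV⟩)
          rw [hdegG' (G.V.erase v) p2 hsubE w] at h5w
          exact h5w
      · intro hc
        have hc' : ∀ e' ∈ p2, u ∉ G.φ e' := hc
        rw [Finset.filter_false_of_mem hc'] at hdegu
        simp at hdegu
    · rintro ⟨q1, q2⟩ hq
      simp only [Finset.mem_coe, Finset.mem_filter, aux_mem_auxP] at hq
      have h3 : q1 = G.V.erase u := hq.1.2.2.1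
      simp only [h3]
    · rintro ⟨p1, p2⟩ hp
      rw [Finset.mem_coe, aux_mem_auxP] at hp
      have h3 : p1 = G.V.erase v := hp.2.2.1
      simp only [h3]
  -- Class 3 : contracted 2-factors through both u and v come from 2-factors of G through e
  have hB3 : ((auxP C k₀).filter
      (fun q => (¬ ∀ e' ∈ q.2, u ∉ G.φ e') ∧ ¬ ∀ e' ∈ q.2, v ∉ G.φ e')).card
      = ((auxP G k₀).filter (fun p => e ∈ p.2)).card := by
    apply Finset.card_nbij' (i := fun q => (G.V, insert e q.2))
      (j := fun p => (G.V.erase u, p.2.erase e))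
    · rintro ⟨q1, q2⟩ hq
      simp only [Finset.mem_coe, Finset.mem_filter, aux_mem_auxP] at hq
      obtain ⟨⟨h1, h2, h3, h4, h5⟩, hne0, hnev⟩ := hq
      have h3' : q1 = G.V.erase u := h3
      subst h3'
      have henq2 : e ∉ q2 := fun h => (Finset.mem_erase.1 (h1 h)).1 rfl
      have hsubE : q2 ⊆ G.E := fun e' he' => (Finset.mem_erase.1 (h1 he')).2
      have hinsE : insert e q2 ⊆ G.E := Finset.insert_subset he hsubE
      have hu1 : ∃ e' ∈ q2, u ∈ G.φ e' := by
        by_contra hcon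
        push_neg at hcon
        exact hne0 (fun e' he' => hcon e' he')
      have hv1 : ∃ e' ∈ q2, v ∈ G.φ e' := by
        by_contra hcon
        push_neg at hcon
        exact hnev (fun e' he' => hcon e' he')
      have hsum : (q2.filter (fun e' => u ∈ G.φ e')).card
          + (q2.filter (fun e' => v ∈ G.φ e')).card = 2 := by
        have h5v : (C.sub (G.V.erase u, q2)).deg v = 2 := h5 v hvinV'
        rw [hdegC' (G.V.erase u) q2 h1 v, hfiltuv q2 h1] at h5v
        exact h5v
      obtain ⟨e1, he1, hue1⟩ := hu1
      obtain ⟨e2, he2, hve2⟩ := hv1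
      have c1 : 0 < (q2.filter (fun e' => u ∈ G.φ e')).card :=
        Finset.card_pos.2 ⟨e1, Finset.mem_filter.2 ⟨he1, hue1⟩⟩
      have c2 : 0 < (q2.filter (fun e' => v ∈ G.φ e')).card :=
        Finset.card_pos.2 ⟨e2, Finset.mem_filter.2 ⟨he2, hve2⟩⟩
      have hcu : (q2.filter (fun e' => u ∈ G.φ e')).card = 1 := by omega
      have hcv : (q2.filter (fun e' => v ∈ G.φ e')).card = 1 := by omega
      rw [Finset.mem_coe, Finset.mem_filter, aux_mem_auxP]
      have hwf : ∀ a b, (G.sub (G.V, insert e q2)).Adj a b →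
          a ∈ (G.sub (G.V, insert e q2)).V ∧ b ∈ (G.sub (G.V, insert e q2)).V := by
        rintro a b ⟨e', he', hab⟩
        have hab' : G.φ e' = s(a, b) := hab
        have he'' : e' ∈ G.E := hinsE he'
        exact ⟨hWFG e' he'' a (by rw [hab']; exact Sym2.mem_mk_left a b),
               hWFG e' he'' b (by rw [hab']; exact Sym2.mem_mk_right a b)⟩
      refine ⟨⟨hinsE, ?_, rfl, ?_, ?_⟩, Finset.mem_insert_self e q2⟩
      · intro e' he' x hx
        exact hWFG e' (hinsE he') x hx
      · have hk0 := aux_k_contract (G.sub (G.V, insert e q2)) u v e huV hvV huv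
          (Finset.mem_insert_self e q2) hφ hwf
        have hk1 : (MG.mk (G.V.erase u) ((insert e q2).erase e)
            (fun e' => Sym2.map f (G.φ e'))).k = (G.sub (G.V, insert e q2)).k := hk0
        rw [Finset.erase_insert henq2] at hk1
        have hk2 : (C.sub (G.V.erase u, q2)).k = (MG.mk (G.V.erase u) q2
            (fun e' => Sym2.map f (G.φ e'))).k := rfl
        exact hk1.symm.trans (hk2.symm.trans h4)
      · intro w hwV0
        have hwV : w ∈ G.V := hwV0
        show (G.sub (G.V, insert e q2)).deg w = 2
        rw [hdegG' G.V (insert e q2) hinsE w, Finset.filter_insert]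
        by_cases hwu : w = u
        · rw [if_pos (by rw [hwu, hφ]; exact Sym2.mem_mk_left u v)]
          rw [Finset.card_insert_of_notMem (fun hmem => henq2 (Finset.mem_filter.1 hmem).1)]
          rw [hwu, hcu]
        · by_cases hwv : w = v
          · rw [if_pos (by rw [hwv, hφ]; exact Sym2.mem_mk_right u v)]
            rw [Finset.card_insert_of_notMem (fun hmem => henq2 (Finset.mem_filter.1 hmem).1)]
            rw [hwv, hcv]
          · rw [if_neg (by rw [hφ, Sym2.mem_iff]; push_neg; exact ⟨hwu, hwv⟩)]
            have h5w : (C.sub (G.V.erase u, q2)).deg w = 2 :=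
              h5 w (Finset.mem_erase.2 ⟨hwu, hwV⟩)
            rw [hdegC' (G.V.erase u) q2 h1 w, hfiltw q2 w hwu hwv] at h5w
            exact h5w
    · rintro ⟨p1, p2⟩ hp
      simp only [Finset.mem_coe, Finset.mem_filter, aux_mem_auxP] at hp
      obtain ⟨⟨h1, h2, h3, h4, h5⟩, hep⟩ := hp
      have h3' : p1 = G.V := h3
      subst h3'
      have hsubE' : p2.erase e ⊆ G.E.erase e := Finset.erase_subset_erase e h1
      have hueφ : u ∈ G.φ e := by rw [hφ]; exact Sym2.mem_mk_left u v
      have hveφ : v ∈ G.φ e := by rw [hφ]; exact Sym2.mem_mk_right u v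
      have hcu2 : (p2.filter (fun e' => u ∈ G.φ e')).card = 2 := by
        have h5u : (G.sub (G.V, p2)).deg u = 2 := h5 u huV
        rw [hdegG' G.V p2 h1 u] at h5u
        exact h5u
      have hcv2 : (p2.filter (fun e' => v ∈ G.φ e')).card = 2 := by
        have h5v : (G.sub (G.V, p2)).deg v = 2 := h5 v hvV
        rw [hdegG' G.V p2 h1 v] at h5v
        exact h5v
      have hcu1 : ((p2.erase e).filter (fun e' => u ∈ G.φ e')).card = 1 := by
        have hemem : e ∈ p2.filter (fun e' => u ∈ G.φ e') := Finset.mem_filter.2 ⟨hep, hueφ⟩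
        rw [Finset.filter_erase, Finset.card_erase_of_mem hemem, hcu2]
      have hcv1 : ((p2.erase e).filter (fun e' => v ∈ G.φ e')).card = 1 := by
        have hemem : e ∈ p2.filter (fun e' => v ∈ G.φ e') := Finset.mem_filter.2 ⟨hep, hveφ⟩
        rw [Finset.filter_erase, Finset.card_erase_of_mem hemem, hcv2]
      rw [Finset.mem_coe, Finset.mem_filter, aux_mem_auxP]
      have hwf : ∀ a b, (G.sub (G.V, p2)).Adj a b →
          a ∈ (G.sub (G.V, p2)).V ∧ b ∈ (G.sub (G.V, p2)).V := by
        rintro a b ⟨e', he', hab⟩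
        have hab' : G.φ e' = s(a, b) := hab
        have he'' : e' ∈ G.E := h1 he'
        exact ⟨hWFG e' he'' a (by rw [hab']; exact Sym2.mem_mk_left a b),
               hWFG e' he'' b (by rw [hab']; exact Sym2.mem_mk_right a b)⟩
      refine ⟨⟨hsubE', ?_, rfl, ?_, ?_⟩, ?_, ?_⟩
      · intro e' he' x hx
        have hx' : x ∈ Sym2.map f (G.φ e') := hx
        show x ∈ G.V.erase u
        exact hCend e' (h1 (Finset.mem_of_mem_erase he')) x hx'
      · have hk0 := aux_k_contract (G.sub (G.V, p2)) u v e huV hvV huv hep hφ hwf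
        have hk1 : (MG.mk (G.V.erase u) (p2.erase e)
            (fun e' => Sym2.map f (G.φ e'))).k = (G.sub (G.V, p2)).k := hk0
        have hk2 : (C.sub (G.V.erase u, p2.erase e)).k = (MG.mk (G.V.erase u) (p2.erase e)
            (fun e' => Sym2.map f (G.φ e'))).k := rfl
        exact hk2.trans (hk1.trans h4)
      · intro w hw0
        have hw : w ∈ G.V.erase u := hw0
        obtain ⟨hwu, hwV⟩ := Finset.mem_erase.1 hw
        show (C.sub (G.V.erase u, p2.erase e)).deg w = 2
        rw [hdegC' (G.V.erase u) (p2.erase e) hsubE' w]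
        by_cases hwv : w = v
        · rw [hwv, hfiltuv (p2.erase e) hsubE', hcu1, hcv1]
        · rw [hfiltw (p2.erase e) w hwu hwv, Finset.filter_erase, Finset.erase_eq_of_notMem]
          · have h5w : (G.sub (G.V, p2)).deg w = 2 := h5 w hwV
            rw [hdegG' G.V p2 h1 w] at h5w
            exact h5w
          · intro hmem
            have hmem' := (Finset.mem_filter.1 hmem).2
            rw [hφ, Sym2.mem_iff] at hmem'
            rcases hmem' with h | h
            exacts [hwu h, hwv h]
      · intro hc
        have hc' : ∀ e' ∈ p2.erase e, u ∉ G.φ e' := hc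
        rw [Finset.filter_false_of_mem hc'] at hcu1
        simp at hcu1
      · intro hc
        have hc' : ∀ e' ∈ p2.erase e, v ∉ G.φ e' := hc
        rw [Finset.filter_false_of_mem hc'] at hcv1
        simp at hcv1
    · rintro ⟨q1, q2⟩ hq
      simp only [Finset.mem_coe, Finset.mem_filter, aux_mem_auxP] at hq
      have h3 : q1 = G.V.erase u := hq.1.2.2.1
      have h1 : q2 ⊆ G.E.erase e := hq.1.1
      have henq2 : e ∉ q2 := fun h => (Finset.mem_erase.1 (h1 h)).1 rfl
      simp only [h3, Finset.erase_insert henq2]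
    · rintro ⟨p1, p2⟩ hp
      simp only [Finset.mem_coe, Finset.mem_filter, aux_mem_auxP] at hp
      have h3 : p1 = G.V := hp.1.2.2.1
      have hep : e ∈ p2 := hp.2
      simp only [h3, Finset.insert_erase hep]
  -- assemble
  have t1 : ((auxP C k₀).filter (fun q => ∀ e' ∈ q.2, u ∉ G.φ e')).card
      + ((auxP C k₀).filter (fun q => ¬ ∀ e' ∈ q.2, u ∉ G.φ e')).card
      = (auxP C k₀).card :=
    Finset.card_filter_add_card_filter_not _
  have t2 : (((auxP C k₀).filter (fun q => ¬ ∀ e' ∈ q.2, u ∉ G.φ e')).filter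
        (fun q => ∀ e' ∈ q.2, v ∉ G.φ e')).card
      + (((auxP C k₀).filter (fun q => ¬ ∀ e' ∈ q.2, u ∉ G.φ e')).filter
        (fun q => ¬ ∀ e' ∈ q.2, v ∉ G.φ e')).card
      = ((auxP C k₀).filter (fun q => ¬ ∀ e' ∈ q.2, u ∉ G.φ e')).card :=
    Finset.card_filter_add_card_filter_not _
  have t3 : ((auxP C k₀).filter (fun q => ¬ ∀ e' ∈ q.2, u ∉ G.φ e')).filter
        (fun q => ∀ e' ∈ q.2, v ∉ G.φ e')
      = (auxP C k₀).filter
        (fun q => (¬ ∀ e' ∈ q.2, u ∉ G.φ e') ∧ ∀ e' ∈ q.2, v ∉ G.φ e') :=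
    Finset.filter_filter _ _ _
  have t4 : ((auxP C k₀).filter (fun q => ¬ ∀ e' ∈ q.2, u ∉ G.φ e')).filter
        (fun q => ¬ ∀ e' ∈ q.2, v ∉ G.φ e')
      = (auxP C k₀).filter
        (fun q => (¬ ∀ e' ∈ q.2, u ∉ G.φ e') ∧ ¬ ∀ e' ∈ q.2, v ∉ G.φ e') :=
    Finset.filter_filter _ _ _
  have hB1c : ((auxP C k₀).filter (fun q => ∀ e' ∈ q.2, u ∉ G.φ e')).card
      = (auxP (G.delV u) k₀).card := congrArg Finset.card hB1
  rw [t3] at t2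
  rw [t4] at t2
  omega

end
end MG
end Aux

open MG in
/-- Lemma 1(1): h_k(G) = h_k(G−uv) + h_k(G/uv) − h_k(G−u) − h_k(G−v)
for a simple graph, an edge with distinct endpoints, and k ≥ 1. -/
theorem twoFactor_deletion_contraction (G : MG) (hG : G.Simple)
    (e u v : ℕ) (he : e ∈ G.E) (hφ : G.φ e = s(u, v)) (huv : u ≠ v)
    (k : ℕ) (hk1 : 1 ≤ k) :
    (G.hk k : ℤ) = (G.delE e).hk k + (G.contract e u v).hk k
      - (G.delV u).hk k - (G.delV v).hk k := by
  classical
  have h1 := MG.aux_stepA G e he k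
  have h2 := MG.aux_stepB G hG e u v he hφ huv k
  rw [MG.aux_hk G k, MG.aux_hk (G.delE e) k, MG.aux_hk (G.contract e u v) k,
    MG.aux_hk (G.delV u) k, MG.aux_hk (G.delV v) k]
  omega
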